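/- Let $p$ be an odd prime. Then there is no subgroup $G\le S_{p+2}$ which is solvable, primitive in its natural action on $\{1,\dots,p+2\}$, and contains a permutation that is a single cycle of length $p$ (thus fixing exactly two points). -/

import Mathlib

/-- A subgroup of `Sₙ` is primitive if its natural action on `{1, …, n}` is transitive
and every block of the action is trivial (a subsingleton or everything). -/
def Subgroup.IsPrimitivePerm {n : ℕ} (G : Subgroup (Equiv.Perm (Fin n))) : Prop :=
  MulAction.IsPretransitive G (Fin n) ∧
    ∀ B : Set (Fin n), MulAction.IsBlock G B → B.Subsingleton ∨ B = Set.univ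

/-- For an odd prime `p`, there is no solvable primitive subgroup of `S_{p+2}`
containing a permutation that is a single cycle of length `p`. -/
theorem no_solvable_primitive_with_p_cycle_fixing_two (p : ℕ) (hp : p.Prime)
    (hodd : Odd p) :
    ¬ ∃ G : Subgroup (Equiv.Perm (Fin (p + 2))), IsSolvable G ∧ G.IsPrimitivePerm ∧
        ∃ σ : Equiv.Perm (Fin (p + 2)), σ ∈ G ∧ σ.IsCycle ∧ σ.support.card = p := by
  classical
  rintro ⟨G, hsolv, ⟨htrans, hblock⟩, σ, hσG, hcyc, hcard⟩
  -- exactly two fixed points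
  have hcfix : σ.supportᶜ.card = 2 := by
    rw [Finset.card_compl, hcard, Fintype.card_fin]
    omega
  obtain ⟨a, b, hab, hc⟩ := Finset.card_eq_two.mp hcfix
  have hfix : ∀ x, σ x = x ↔ (x = a ∨ x = b) := by
    intro x
    rw [← Equiv.Perm.notMem_support, ← Finset.mem_compl, hc]
    simp
  have ha : σ a = a := (hfix a).2 (Or.inl rfl)
  have hb : σ b = b := (hfix b).2 (Or.inr rfl)
  -- minimal vanishing index of derived series
  have hex : ∃ n, derivedSeries ↥G n = ⊥ := hsolv.solvable
  have hσ1 : σ ≠ 1 := by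
    intro h
    have h2 : σ.support.card = 0 := by rw [h]; simp
    rw [hcard] at h2
    exact hp.ne_zero h2
  have h0 : derivedSeries ↥G 0 ≠ ⊥ := by
    rw [derivedSeries_zero]
    intro h
    have : (⟨σ, hσG⟩ : ↥G) ∈ (⊥ : Subgroup ↥G) := h ▸ Subgroup.mem_top _
    rw [Subgroup.mem_bot] at this
    exact hσ1 (congrArg Subtype.val this)
  obtain ⟨j, hj⟩ : ∃ j, Nat.find hex = j + 1 := by
    rcases Nat.exists_eq_add_of_lt (Nat.pos_of_ne_zero (fun h => h0 (h ▸ Nat.find_spec hex))) with ⟨j, hj⟩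
    exact ⟨j, by omega⟩
  have hkspec : derivedSeries ↥G (j + 1) = ⊥ := hj ▸ Nat.find_spec hex
  set N := derivedSeries ↥G j with hN
  have hNbot : N ≠ ⊥ := Nat.find_min hex (by omega)
  have hNnormal : N.Normal := derivedSeries_normal ↥G j
  have hcomm : ∀ x ∈ N, ∀ y ∈ N, x * y = y * x := by
    intro x hx y hy
    open scoped commutatorElement in
    have h1 : ⁅x, y⁆ ∈ derivedSeries ↥G (j + 1) := by
      rw [derivedSeries_succ]
      exact Subgroup.commutator_mem_commutator hx hy
    rw [hkspec, Subgroup.mem_bot] at h1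
    exact commutatorElement_eq_one_iff_mul_comm.mp h1
  -- some element of N moves some point
  obtain ⟨τ, hτN, hτ1⟩ : ∃ τ : ↥G, τ ∈ N ∧ τ ≠ 1 := by
    obtain ⟨⟨τ, hτN⟩, hτ1⟩ := Subgroup.ne_bot_iff_exists_ne_one.mp hNbot
    exact ⟨τ, hτN, fun h => hτ1 (Subtype.ext h)⟩
  obtain ⟨x₀, hx₀⟩ : ∃ x : Fin (p+2), τ • x ≠ x := by
    by_contra h
    push_neg at h
    apply hτ1
    apply Subtype.ext
    apply Equiv.ext
    intro y
    exact h y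
  -- orbit of x₀ under N is everything
  have horbB : MulAction.IsBlock ↥G (MulAction.orbit N x₀) :=
    MulAction.IsBlock.orbit_of_normal x₀
  have horb : MulAction.orbit N x₀ = Set.univ := by
    rcases hblock _ horbB with h | h
    · exfalso
      apply hx₀
      have h1 : (τ • x₀ : Fin (p+2)) ∈ MulAction.orbit N x₀ :=
        ⟨⟨τ, hτN⟩, rfl⟩
      exact h h1 (MulAction.mem_orbit_self x₀)
    · exact h
  have htrans2 : ∀ y x : Fin (p+2), ∃ c ∈ N, c • y = x := by
    have h1 : ∀ x : Fin (p+2), ∃ c ∈ N, c • x₀ = x := by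
      intro x
      have : x ∈ MulAction.orbit N x₀ := horb ▸ Set.mem_univ x
      obtain ⟨⟨c, hc⟩, h⟩ := this
      exact ⟨c, hc, h⟩
    intro y x
    obtain ⟨c, hc, hcy⟩ := h1 y
    obtain ⟨d, hd, hdx⟩ := h1 x
    refine ⟨d * c⁻¹, N.mul_mem hd (N.inv_mem hc), ?_⟩
    rw [mul_smul, ← hcy, inv_smul_smul, hdx]
  have hreg : ∀ y : Fin (p+2), ∀ c ∈ N, c • y = y → c = 1 := by
    intro y c hc hcy
    have : ∀ x : Fin (p+2), c • x = x := by
      intro x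
      obtain ⟨d, hd, hdx⟩ := htrans2 y x
      rw [← hdx, ← mul_smul, hcomm c hc d hd, mul_smul, hcy]
    apply Subtype.ext
    apply Equiv.ext
    intro z
    exact this z
  -- find n sending a to b
  obtain ⟨n, hn, hna⟩ := htrans2 a b
  set σ' : ↥G := ⟨σ, hσG⟩ with hσ'
  have hσa : σ' • a = a := ha
  have hσb : σ' • b = b := hb
  have hconj : σ' * n * σ'⁻¹ ∈ N := hNnormal.conj_mem n hn σ'
  have hconja : (σ' * n * σ'⁻¹) • a = b := by
    have hinva : σ'⁻¹ • a = a := by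
      rw [← hσa, inv_smul_smul, hσa]
    rw [mul_smul, mul_smul, hinva, hna, hσb]
  have hconjeq : σ' * n * σ'⁻¹ = n := by
    have h1 : (n⁻¹ * (σ' * n * σ'⁻¹)) • a = a := by
      rw [mul_smul, hconja, ← hna, inv_smul_smul]
    have h2 := hreg a _ (N.mul_mem (N.inv_mem hn) hconj) h1
    exact (inv_mul_eq_one.mp h2).symm
  have hcommσ : σ' * n = n * σ' := by
    exact mul_inv_eq_iff_eq_mul.mp hconjeq
  have hnb : σ' • (n • b) = n • b := by
    rw [← mul_smul, hcommσ, mul_smul, hσb]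
  have hnb2 : n • b = a ∨ n • b = b := (hfix _).1 hnb
  have hn1 : n ≠ 1 := by
    intro h
    rw [h, one_smul] at hna
    exact hab hna
  have hnba : n • b = a := by
    rcases hnb2 with h | h
    · exact h
    · exact absurd (hreg b n hn h) hn1
  have hnsq : n ^ 2 = 1 := by
    apply hreg a _ (N.pow_mem hn 2)
    rw [pow_two, mul_smul, hna, hnba]
  have hord : orderOf n = 2 := orderOf_eq_prime hnsq hn1
  -- card N = p + 2
  have hcardN : Nat.card ↥N = p + 2 := by
    have hbij : Function.Bijective (fun m : ↥N => (m : ↥G) • a : ↥N → Fin (p+2)) := by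
      constructor
      · intro m1 m2 h
        simp only at h
        have h1 : ((m1 : ↥G)⁻¹ * (m2 : ↥G)) • a = a := by
          rw [mul_smul, ← h, inv_smul_smul]
        have := hreg a _ (N.mul_mem (N.inv_mem m1.2) m2.2) h1
        exact Subtype.ext (inv_mul_eq_one.mp this)
      · intro x
        obtain ⟨c, hc, hcx⟩ := htrans2 a x
        exact ⟨⟨c, hc⟩, hcx⟩
    rw [Nat.card_eq_of_bijective _ hbij, Nat.card_eq_fintype_card, Fintype.card_fin]
  have hdvd : orderOf n ∣ Nat.card ↥N := N.orderOf_dvd_natCard hn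
  rw [hord, hcardN] at hdvd
  have : ¬ Even p := Nat.not_even_iff_odd.mpr hodd
  apply this
  rw [Nat.even_iff]
  omega
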